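/- Let c be a nonzero Gaussian integer and let n be a positive integer such that c divides n in ℤ[i]. Then the number of pairs (α, δ) in (ℤ[i]/nℤ[i])² such that c divides αδ − 1 in ℤ[i] (a condition well defined on residues mod n) equals φ(c)·(n²/N(c))². -/

import Mathlib

/-- Euler's totient function on the Gaussian integers: the number of units of `ℤ[i]/γℤ[i]`. -/
noncomputable def gaussianPhi (γ : GaussianInt) : ℕ :=
  Nat.card (GaussianInt ⧸ Ideal.span ({γ} : Set GaussianInt))ˣ

private def giEquivFun : GaussianInt ≃ₗ[ℤ] (Fin 2 → ℤ) where
  toFun x := ![x.re, x.im]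
  invFun v := ⟨v 0, v 1⟩
  map_add' x y := by funext i; fin_cases i <;> simp
  map_smul' z x := by
    funext i; fin_cases i <;>
      simp [zsmul_eq_mul, Zsqrtd.re_smul, Zsqrtd.im_smul]
  left_inv x := by ext <;> simp
  right_inv v := by funext i; fin_cases i <;> simp

private noncomputable def giBasis : Module.Basis (Fin 2) ℤ GaussianInt := .ofEquivFun giEquivFun

instance : Module.Free ℤ GaussianInt := Module.Free.of_basis giBasis
instance : Module.Finite ℤ GaussianInt := Module.Finite.of_basis giBasis

private lemma algebraNorm_eq (γ : GaussianInt) : Algebra.norm ℤ γ = γ.norm := by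
  have hb0 : giBasis 0 = (⟨1, 0⟩ : GaussianInt) := by
    simp only [giBasis, Module.Basis.coe_ofEquivFun]
    rfl
  have hb1 : giBasis 1 = (⟨0, 1⟩ : GaussianInt) := by
    simp only [giBasis, Module.Basis.coe_ofEquivFun]
    rfl
  rw [Algebra.norm_eq_matrix_det giBasis, Matrix.det_fin_two]
  simp only [Algebra.leftMulMatrix_eq_repr_mul, giBasis, Module.Basis.ofEquivFun_repr_apply]
  rw [show (Module.Basis.ofEquivFun giEquivFun) = giBasis from rfl, hb0, hb1]
  simp only [giEquivFun, LinearEquiv.coe_mk, Equiv.coe_fn_mk, Matrix.cons_val_zero,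
    Matrix.cons_val_one, Matrix.head_cons, Zsqrtd.re_mul, Zsqrtd.im_mul, Zsqrtd.norm_def,
    LinearMap.coe_mk, AddHom.coe_mk]
  ring

private lemma card_quot (γ : GaussianInt) :
    Nat.card (GaussianInt ⧸ Ideal.span ({γ} : Set GaussianInt)) = γ.norm.natAbs := by
  rw [← Submodule.cardQuot_apply, ← Ideal.absNorm_apply, Ideal.absNorm_span_singleton,
    algebraNorm_eq]

section General
variable {A B : Type*} [CommRing A] [CommRing B] (f : A →+* B) (hf : Function.Surjective f)

private lemma card_dom_eq (f : A →+* B) (hf : Function.Surjective f) :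
    Nat.card A = Nat.card B * Nat.card {a : A // f a = 0} := by
  set σ : B → A := Function.surjInv hf with hσdef
  have hσ : ∀ t, f (σ t) = t := Function.surjInv_eq hf
  have e : A ≃ B × {a : A // f a = 0} :=
    { toFun := fun a => (f a, ⟨a - σ (f a), by rw [map_sub, hσ, sub_self]⟩)
      invFun := fun t => t.2.1 + σ t.1
      left_inv := fun a => by simp
      right_inv := fun t => by
        obtain ⟨t, ⟨b, hb⟩⟩ := t
        have h1 : f (b + σ t) = t := by rw [map_add, hb, hσ, zero_add]
        ext
        · simpa using h1
        · simp [h1] }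
  rw [Nat.card_congr e, Nat.card_prod]

private lemma card_pairs (f : A →+* B) (hf : Function.Surjective f) :
    Nat.card {p : A × A // f p.1 * f p.2 = 1} =
      Nat.card Bˣ * Nat.card {a : A // f a = 0} * Nat.card {a : A // f a = 0} := by
  set σ : B → A := Function.surjInv hf with hσdef
  have hσ : ∀ t, f (σ t) = t := Function.surjInv_eq hf
  have e1 : {p : A × A // f p.1 * f p.2 = 1} ≃
      {a : A // IsUnit (f a)} × {a : A // f a = 0} :=
    { toFun := fun p =>
        (⟨p.1.1, IsUnit.of_mul_eq_one _ p.2⟩,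
          ⟨p.1.2 - σ (Ring.inverse (f p.1.1)), by
            have hu : IsUnit (f p.1.1) := IsUnit.of_mul_eq_one _ p.2
            have hb : Ring.inverse (f p.1.1) = f p.1.2 := by
              calc Ring.inverse (f p.1.1) = Ring.inverse (f p.1.1) * (f p.1.1 * f p.1.2) := by
                    rw [p.2, mul_one]
                _ = (Ring.inverse (f p.1.1) * f p.1.1) * f p.1.2 := by ring
                _ = f p.1.2 := by rw [Ring.inverse_mul_cancel _ hu, one_mul]
            rw [map_sub, hσ, hb, sub_self]⟩)
      invFun := fun t =>
        ⟨(t.1.1, t.2.1 + σ (Ring.inverse (f t.1.1))), by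
          rw [map_add, t.2.2, zero_add, hσ, Ring.mul_inverse_cancel _ t.1.2]⟩
      left_inv := fun p => by
        apply Subtype.ext
        apply Prod.ext
        · rfl
        · simp
      right_inv := fun t => by
        obtain ⟨⟨a, ha⟩, ⟨b, hb⟩⟩ := t
        apply Prod.ext
        · rfl
        · apply Subtype.ext
          simp }
  have e2 : {a : A // IsUnit (f a)} ≃ Bˣ × {a : A // f a = 0} :=
    { toFun := fun a => (a.2.unit, ⟨a.1 - σ (f a.1), by rw [map_sub, hσ, sub_self]⟩)
      invFun := fun t => ⟨t.2.1 + σ ↑t.1, by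
        rw [map_add, t.2.2, zero_add, hσ]; exact t.1.isUnit⟩
      left_inv := fun a => by
        apply Subtype.ext
        simp [IsUnit.unit_spec]
      right_inv := fun t => by
        obtain ⟨u, ⟨b, hb⟩⟩ := t
        have h1 : f (b + σ ↑u) = ↑u := by rw [map_add, hb, hσ, zero_add]
        apply Prod.ext
        · apply Units.ext
          simpa using h1
        · apply Subtype.ext
          simp [h1] }
  rw [Nat.card_congr e1, Nat.card_prod, Nat.card_congr e2, Nat.card_prod]

end General

theorem count_inverse_pairs_mod
    (c : GaussianInt) (hc : c ≠ 0) (n : ℕ) (hn : 0 < n)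
    (hcn : c ∣ (n : GaussianInt)) :
    (Nat.card {p : (GaussianInt ⧸ Ideal.span ({(n : GaussianInt)} : Set GaussianInt)) ×
        (GaussianInt ⧸ Ideal.span ({(n : GaussianInt)} : Set GaussianInt)) //
        ∃ x y : GaussianInt, Ideal.Quotient.mk _ x = p.1 ∧ Ideal.Quotient.mk _ y = p.2 ∧
          c ∣ (x * y - 1)} : ℤ) =
      gaussianPhi c * ((n : ℤ) ^ 2 / c.norm) ^ 2 := by
  set I : Ideal GaussianInt := Ideal.span ({(n : GaussianInt)} : Set GaussianInt) with hI
  set J : Ideal GaussianInt := Ideal.span ({c} : Set GaussianInt) with hJ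
  have hIJ : I ≤ J := Ideal.span_singleton_le_span_singleton.2 hcn
  set f : GaussianInt ⧸ I →+* GaussianInt ⧸ J := Ideal.Quotient.factor hIJ with hf
  have hfs : Function.Surjective f := by
    intro t
    obtain ⟨x, rfl⟩ := Ideal.Quotient.mk_surjective t
    exact ⟨Ideal.Quotient.mk I x, Ideal.Quotient.factor_mk hIJ x⟩
  have hpred : ∀ p : (GaussianInt ⧸ I) × (GaussianInt ⧸ I),
      (∃ x y : GaussianInt, Ideal.Quotient.mk _ x = p.1 ∧ Ideal.Quotient.mk _ y = p.2 ∧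
        c ∣ (x * y - 1)) ↔ f p.1 * f p.2 = 1 := by
    intro p
    constructor
    · rintro ⟨x, y, hx, hy, hd⟩
      rw [← hx, ← hy, hf, Ideal.Quotient.factor_mk, Ideal.Quotient.factor_mk, ← map_mul,
        ← map_one (Ideal.Quotient.mk J), Ideal.Quotient.eq]
      exact Ideal.mem_span_singleton.2 hd
    · intro h
      obtain ⟨x, hx⟩ := Ideal.Quotient.mk_surjective p.1
      obtain ⟨y, hy⟩ := Ideal.Quotient.mk_surjective p.2
      refine ⟨x, y, hx, hy, Ideal.mem_span_singleton.1 ?_⟩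
      rw [← Ideal.Quotient.eq, map_one]
      rw [← hx, ← hy, hf, Ideal.Quotient.factor_mk, Ideal.Quotient.factor_mk, ← map_mul] at h
      exact h
  set k := Nat.card {a : GaussianInt ⧸ I // f a = 0} with hk
  have hQ : Nat.card (GaussianInt ⧸ I) = n ^ 2 := by
    rw [hI, card_quot, Zsqrtd.norm_natCast]
    simp [sq, Int.natAbs_mul]
  have hC : Nat.card (GaussianInt ⧸ J) = c.norm.natAbs := card_quot c
  have hkey : n ^ 2 = c.norm.natAbs * k := by
    rw [← hQ, card_dom_eq f hfs, hC]
  have hset : Nat.card {p : (GaussianInt ⧸ I) × (GaussianInt ⧸ I) //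
      ∃ x y : GaussianInt, Ideal.Quotient.mk _ x = p.1 ∧ Ideal.Quotient.mk _ y = p.2 ∧
        c ∣ (x * y - 1)} = gaussianPhi c * k * k := by
    rw [Nat.card_congr (Equiv.subtypeEquivRight hpred), card_pairs f hfs]
    rfl
  have hnorm0 : c.norm ≠ 0 := fun h => hc ((Zsqrtd.norm_eq_zero_iff (by norm_num) c).1 h)
  have hnormnn : 0 ≤ c.norm := Zsqrtd.norm_nonneg (by norm_num) c
  have hkeyZ : (n : ℤ) ^ 2 = c.norm * k := by
    have := congrArg (fun m : ℕ => (m : ℤ)) hkey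
    push_cast at this
    rwa [abs_of_nonneg hnormnn] at this
  have hdiv : ((n : ℤ) ^ 2) / c.norm = (k : ℤ) := by
    rw [hkeyZ, Int.mul_ediv_cancel_left _ hnorm0]
  rw [hset, hdiv]
  push_cast
  ring
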